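/- arXiv:1506.05854 — 3 statements merged into one kernel-verified Lean document; each statement's English description precedes it below -/
import Mathlib

section
/- Let H be a group, N an abelian group, and ϖ : H × H → N a normalized 2-cocycle, with symmetry functions σ_H on H and σ_N on N (where σ_N additionally satisfies σ_N(n) = σ_N(n⁻¹)·n = n·σ_N(n⁻¹)). Define on G := H × N the central extension multiplication (h₁,n₁)(h₂,n₂) := (h₁h₂, n₁n₂ϖ(h₁,h₂)), and define σ(h,n) := (σ_H(h), σ_N(ϖ(σ_H(h⁻¹), h)·n)). Then σ is a symmetry function for G, i.e. σ((h,n)⁻¹)·(h,n) = σ(h,n) in G. -/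
/-- Central extension `G = H × N` with multiplication
`(h₁,n₁)(h₂,n₂) = (h₁h₂, n₁n₂ ϖ(h₁,h₂))` and inverse
`(h,n)⁻¹ = (h⁻¹, ϖ(h⁻¹,h)⁻¹ n⁻¹)`. Given symmetry functions `σH` on `H` and `σN` on `N`,
the map `σ(h,n) := (σH h, σN (ϖ(σH h⁻¹, h) * n))` is a symmetry function for `G`:
`σ((h,n)⁻¹) · (h,n) = σ(h,n)`. -/
theorem central_extension_symmetry {H N : Type*} [Group H] [CommGroup N]
    (ϖ : H → H → N)
    (hnorm : ∀ h : H, ϖ h 1 = 1 ∧ ϖ 1 h = 1)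
    (hcoc : ∀ h₁ h₂ h₃ : H, ϖ h₁ h₂ * ϖ (h₁ * h₂) h₃ = ϖ h₂ h₃ * ϖ h₁ (h₂ * h₃))
    (σH : H → H) (hσH : ∀ h : H, σH h = σH h⁻¹ * h)
    (σN : N → N) (hσN : ∀ n : N, σN n = σN n⁻¹ * n)
    (mul : H × N → H × N → H × N)
    (hmul : ∀ p q : H × N, mul p q = (p.1 * q.1, p.2 * q.2 * ϖ p.1 q.1))
    (inv : H × N → H × N)
    (hinv : ∀ p : H × N, inv p = (p.1⁻¹, (ϖ p.1⁻¹ p.1)⁻¹ * p.2⁻¹))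
    (σ : H × N → H × N)
    (hσ : ∀ p : H × N, σ p = (σH p.1, σN (ϖ (σH p.1⁻¹) p.1 * p.2))) :
    ∀ p : H × N, mul (σ (inv p)) p = σ p := by
  rintro ⟨h, n⟩
  -- symmetry of the inverse cocycle values
  have hsym : ϖ h h⁻¹ = ϖ h⁻¹ h := by
    have := hcoc h h⁻¹ h
    simpa [mul_inv_cancel, inv_mul_cancel, (hnorm h).1, (hnorm h).2] using this
  -- key cocycle identity
  have hkey : ϖ (σH h⁻¹) h * ϖ (σH h) h⁻¹ = ϖ h⁻¹ h := by
    have := hcoc (σH h⁻¹) h h⁻¹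
    rw [← hσH h] at this
    simpa [mul_inv_cancel, (hnorm (σH h⁻¹)).1, hsym] using this
  simp only [hinv, hσ, hmul]
  ext
  · simp [(hσH h).symm]
  · simp only [inv_inv]
    have hm := hσN (ϖ (σH h⁻¹) h * n)
    rw [mul_inv_rev] at hm
    have hA : ϖ (σH h) h⁻¹ * ((ϖ h⁻¹ h)⁻¹ * n⁻¹) = n⁻¹ * (ϖ (σH h⁻¹) h)⁻¹ := by
      rw [← hkey, mul_inv_rev, mul_assoc, mul_inv_cancel_left, mul_comm]
    rw [hm, hA]
    simp [mul_assoc, mul_comm, mul_left_comm]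
end

section
/- Let G be a unimodular locally compact group with Haar measure m and τ : G → G a measurable map such that cvᵗ(x,y) := (x·τ(y⁻¹x)⁻¹, y⁻¹x) is measurable. Then composition with cvᵗ defines a unitary operator CVᵗ on L²(G × G, m ⊗ m). -/
open MeasureTheory

/-- On a unimodular locally compact group `G` with Haar measure `μ` (left and right
invariant), for a measurable `τ : G → G` such that
`cvᵗ(x,y) := (x·τ(y⁻¹x)⁻¹, y⁻¹x)` is measurable, composition with `cvᵗ` defines a
unitary operator on `L²(G×G, μ ⊗ μ)`. -/
theorem cv_composition_unitary {G : Type*} [Group G] [TopologicalSpace G]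
    [IsTopologicalGroup G] [LocallyCompactSpace G] [MeasurableSpace G] [BorelSpace G]
    (μ : Measure G) [μ.IsHaarMeasure] [μ.IsMulRightInvariant] [SigmaFinite μ]
    (τ : G → G) (hτ : Measurable τ)
    (hcv : Measurable (fun p : G × G => (p.1 * (τ (p.2⁻¹ * p.1))⁻¹, p.2⁻¹ * p.1))) :
    ∃ U : Lp ℂ 2 (μ.prod μ) ≃ₗᵢ[ℂ] Lp ℂ 2 (μ.prod μ),
      ∀ F : Lp ℂ 2 (μ.prod μ),
        (U F : G × G → ℂ) =ᵐ[μ.prod μ]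
          fun p : G × G => F (p.1 * (τ (p.2⁻¹ * p.1))⁻¹, p.2⁻¹ * p.1) := by
  -- Multiplication of pairs is measurable (extracted from `hcv`).
  have h2 : Measurable (fun p : G × G => p.2⁻¹ * p.1) := measurable_snd.comp hcv
  have hmul : Measurable (fun p : G × G => p.1 * p.2) := by
    have := h2.comp ((measurable_snd.prodMk measurable_fst.inv) :
      Measurable (fun p : G × G => (p.2, p.1⁻¹)))
    simpa [Function.comp_def] using this
  have : MeasurableMul₂ G := ⟨hmul⟩
  -- μ is inversion invariant (unimodularity).
  obtain ⟨x₀⟩ : Nonempty G := ⟨1⟩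
  obtain ⟨K, hKc, hKmem⟩ := exists_compact_mem_nhds x₀
  have hK0 : μ K ≠ 0 := by
    refine (Measure.measure_pos_of_nonempty_interior μ ?_).ne'
    exact ⟨x₀, mem_interior_iff_mem_nhds.2 hKmem⟩
  have hKfin : μ K ≠ ⊤ := hKc.measure_lt_top.ne
  have hKinv0 : μ.inv K ≠ 0 := by
    rw [Measure.inv_apply]
    refine (Measure.measure_pos_of_nonempty_interior μ ?_).ne'
    have hsub : (interior K)⁻¹ ⊆ interior K⁻¹ :=
      interior_maximal (Set.inv_subset_inv.2 interior_subset) isOpen_interior.inv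
    exact ⟨x₀⁻¹, hsub (Set.inv_mem_inv.2 (mem_interior_iff_mem_nhds.2 hKmem))⟩
  have hKinvfin : μ.inv K ≠ ⊤ := by
    rw [Measure.inv_apply]
    exact hKc.inv.measure_lt_top.ne
  have hinv : μ.inv = μ := by
    have h2eq : μ.inv = (μ.inv K / μ K) • μ :=
      measure_eq_div_smul μ.inv μ hK0 hKfin
    set d : ENNReal := μ.inv K / μ K with hd
    have hμeq : μ = (d ^ 2) • μ := by
      conv_lhs => rw [← μ.inv_inv, h2eq]
      rw [Measure.inv, Measure.map_smul, ← Measure.inv, h2eq, smul_smul, sq]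
    have hKeq : d ^ 2 * μ K = 1 * μ K := by
      rw [one_mul]; nth_rewrite 2 [hμeq]; simp [ENNReal.smul_def]
    have hd2 : d ^ 2 = 1 := (ENNReal.mul_left_inj hK0 hKfin).1 hKeq
    have hd1 : d = 1 := by
      have : d ^ 2 = 1 ^ 2 := by simpa using hd2
      exact (ENNReal.pow_right_strictMono two_ne_zero).injective this
    rw [h2eq, hd1, one_smul]
  have : μ.IsInvInvariant := ⟨hinv⟩
  -- The first shear `(x, y) ↦ (x, y⁻¹ * x)` is measure preserving.
  have hB : MeasurePreserving (fun p : G × G => (p.1, p.2⁻¹ * p.1)) (μ.prod μ) (μ.prod μ) := by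
    refine (MeasurePreserving.id μ).skew_product (g := fun x y => y⁻¹ * x) ?_
      (Filter.Eventually.of_forall fun x => ?_)
    · exact h2
    · show Measure.map (fun y : G => y⁻¹ * x) μ = μ
      have heq : (fun y : G => y⁻¹ * x) = (fun z : G => z * x) ∘ Inv.inv := rfl
      rw [heq, ← Measure.map_map (measurable_mul_const x) measurable_inv,
        Measure.map_inv_eq_self, map_mul_right_eq_self]
  -- The second map `(u, v) ↦ (u * (τ v)⁻¹, v)` is measure preserving.
  have hA' : MeasurePreserving (fun p : G × G => (p.1, p.2 * (τ p.1)⁻¹)) (μ.prod μ) (μ.prod μ) := by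
    refine (MeasurePreserving.id μ).skew_product (g := fun v u => u * (τ v)⁻¹) ?_
      (Filter.Eventually.of_forall fun v => ?_)
    · show Measurable fun p : G × G => p.2 * (τ p.1)⁻¹
      exact measurable_snd.mul (hτ.comp measurable_fst).inv
    · exact map_mul_right_eq_self μ _
  have hA : MeasurePreserving (fun p : G × G => (p.1 * (τ p.2)⁻¹, p.2))
      (μ.prod μ) (μ.prod μ) := by
    have hswap : MeasurePreserving (Prod.swap : G × G → G × G) (μ.prod μ) (μ.prod μ) :=
      Measure.measurePreserving_swap
    have := hswap.comp (hA'.comp hswap)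
    exact this
  -- The map `cv` itself is measure preserving.
  have hcvmp : MeasurePreserving
      (fun p : G × G => (p.1 * (τ (p.2⁻¹ * p.1))⁻¹, p.2⁻¹ * p.1)) (μ.prod μ) (μ.prod μ) := by
    have := hA.comp hB
    exact this
  -- `cv` as a measurable equivalence, with explicit inverse.
  have hψm : Measurable (fun p : G × G => (p.1 * τ p.2, p.1 * τ p.2 * p.2⁻¹)) := by
    have h1 : Measurable (fun p : G × G => p.1 * τ p.2) :=
      measurable_fst.mul (hτ.comp measurable_snd)
    exact h1.prodMk (h1.mul measurable_snd.inv)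
  let e : G × G ≃ᵐ G × G :=
    { toFun := fun p : G × G => (p.1 * (τ (p.2⁻¹ * p.1))⁻¹, p.2⁻¹ * p.1)
      invFun := fun p : G × G => (p.1 * τ p.2, p.1 * τ p.2 * p.2⁻¹)
      left_inv := by
        rintro ⟨x, y⟩
        refine Prod.ext ?_ ?_ <;> simp [mul_assoc]
      right_inv := by
        rintro ⟨u, v⟩
        have hv : (u * τ v * v⁻¹)⁻¹ * (u * τ v) = v := by group
        refine Prod.ext ?_ ?_ <;> simp [hv, mul_assoc]
      measurable_toFun := hcv
      measurable_invFun := hψm }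
  have hψmp : MeasurePreserving (fun p : G × G => (p.1 * τ p.2, p.1 * τ p.2 * p.2⁻¹))
      (μ.prod μ) (μ.prod μ) := hcvmp.symm e
  -- Build the unitary.
  let f : Lp ℂ 2 (μ.prod μ) →ₗ[ℂ] Lp ℂ 2 (μ.prod μ) :=
    Lp.compMeasurePreservingₗ ℂ _ hcvmp
  let g : Lp ℂ 2 (μ.prod μ) →ₗ[ℂ] Lp ℂ 2 (μ.prod μ) :=
    Lp.compMeasurePreservingₗ ℂ _ hψmp
  have hfg : ∀ F : Lp ℂ 2 (μ.prod μ), f (g F) = F := by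
    intro F
    refine Lp.ext ?_
    have h1 : (f (g F) : G × G → ℂ) =ᵐ[μ.prod μ] (g F : G × G → ℂ) ∘ e :=
      Lp.coeFn_compMeasurePreserving (g F) hcvmp
    have h2 : (g F : G × G → ℂ) =ᵐ[μ.prod μ] (F : G × G → ℂ) ∘ e.symm :=
      Lp.coeFn_compMeasurePreserving F hψmp
    refine h1.trans ?_
    refine (hcvmp.quasiMeasurePreserving.ae_eq_comp h2).trans ?_
    refine Filter.Eventually.of_forall fun p => ?_
    simp only [Function.comp_apply]
    exact congrArg _ (e.left_inv p)
  have hgf : ∀ F : Lp ℂ 2 (μ.prod μ), g (f F) = F := by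
    intro F
    refine Lp.ext ?_
    have h1 : (g (f F) : G × G → ℂ) =ᵐ[μ.prod μ] (f F : G × G → ℂ) ∘ e.symm :=
      Lp.coeFn_compMeasurePreserving (f F) hψmp
    have h2 : (f F : G × G → ℂ) =ᵐ[μ.prod μ] (F : G × G → ℂ) ∘ e :=
      Lp.coeFn_compMeasurePreserving F hcvmp
    refine h1.trans ?_
    refine (hψmp.quasiMeasurePreserving.ae_eq_comp h2).trans ?_
    refine Filter.Eventually.of_forall fun p => ?_
    simp only [Function.comp_apply]
    exact congrArg _ (e.right_inv p)
  refine ⟨⟨LinearEquiv.ofLinear f g (LinearMap.ext hfg) (LinearMap.ext hgf),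
    fun F => Lp.norm_compMeasurePreserving F hcvmp⟩, fun F => ?_⟩
  exact Lp.coeFn_compMeasurePreserving F hcvmp
end

section
/- Let G be a noncompact locally compact group, and for f ∈ L¹(G) let Conv_L(f) be the left-convolution operator on L²(G), which commutes with all right translations R(x), where R(x) is unitary and R(x) → 0 weakly as x → ∞. If Conv_L(f) is a compact operator, then Conv_L(f) = 0. -/
open Filter

/-- Abstract form of: on a noncompact group, a compact left-convolution operator is zero.
`C` is a compact operator on a Hilbert space `H`, commuting with a family of isometric
(unitary) operators `R x`, `x ∈ G`, which tend weakly to `0` as `x → ∞` (along the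
cocompact filter of the noncompact group `G`). Then `C = 0`. -/
theorem compact_convolution_zero {G : Type*} [Group G] [TopologicalSpace G]
    [NoncompactSpace G]
    {H : Type*} [NormedAddCommGroup H] [InnerProductSpace ℂ H] [CompleteSpace H]
    (C : H →L[ℂ] H) (hC : IsCompactOperator C)
    (R : G → H →L[ℂ] H)
    (hRiso : ∀ (x : G) (u : H), ‖R x u‖ = ‖u‖)
    (hcomm : ∀ x : G, C.comp (R x) = (R x).comp C)
    (hweak : ∀ u v : H,
      Tendsto (fun x : G => (inner ℂ v (R x u) : ℂ)) (cocompact G) (nhds 0)) :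
    C = 0 := by
  have hne : (cocompact G).NeBot := Filter.cocompact_neBot_iff.mpr ‹_›
  ext u
  simp only [ContinuousLinearMap.zero_apply]
  set c := ‖C u‖ with hc
  -- w x := C (R x u) has norm c
  have hwnorm : ∀ x : G, ‖C (R x u)‖ = c := by
    intro x
    have h1 : C (R x u) = R x (C u) := congrFun (congrArg DFunLike.coe (hcomm x)) u
    rw [h1, hRiso]
  have key : ∀ ε : ℝ, 0 < ε → c ^ 2 ≤ ε * c + ε := by
    intro ε hε
    obtain ⟨K, hK, hKmem⟩ := hC
    obtain ⟨r, hr, hball⟩ := Metric.mem_nhds_iff.mp hKmem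
    set a : ℝ := r / (2 * (‖u‖ + 1)) with ha
    have hupos : (0:ℝ) < ‖u‖ + 1 := by positivity
    have hapos : 0 < a := by positivity
    have hmem : ∀ x : G, (a:ℂ) • (R x u) ∈ Metric.ball (0:H) r := by
      intro x
      simp only [Metric.mem_ball, dist_zero_right, norm_smul, hRiso, Complex.norm_real]
      calc ‖(a:ℝ)‖ * ‖u‖ ≤ a * (‖u‖ + 1) := by
              rw [Real.norm_of_nonneg hapos.le]
              nlinarith [norm_nonneg u]
        _ = r / 2 := by rw [ha]; field_simp <;> ring
        _ < r := by linarith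
    -- image in compact set a⁻¹ • K
    set K' : Set H := (fun v => (a:ℂ)⁻¹ • v) '' K with hK'
    have hK'c : IsCompact K' := hK.image (continuous_const_smul _)
    have hmemK' : ∀ x : G, C (R x u) ∈ K' := by
      intro x
      refine ⟨C ((a:ℂ) • R x u), hball (hmem x), ?_⟩
      show (a:ℂ)⁻¹ • C ((a:ℂ) • R x u) = _
      rw [map_smul, smul_smul, inv_mul_cancel₀ (by exact_mod_cast hapos.ne'), one_smul]
    obtain ⟨t, htfin, htsub⟩ := Metric.totallyBounded_iff.mp hK'c.totallyBounded ε hε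
    -- eventually all inner products with elements of t are small
    have hsmall : ∀ᶠ x : G in cocompact G, ∀ y ∈ t, ‖(inner ℂ y (C (R x u)) : ℂ)‖ < ε := by
      rw [eventually_all_finite htfin]
      intro y _
      have h := hweak u (ContinuousLinearMap.adjoint C y)
      have h2 : Tendsto (fun x : G => (inner ℂ y (C (R x u)) : ℂ)) (cocompact G) (nhds 0) := by
        refine h.congr fun x => ?_
        exact ContinuousLinearMap.adjoint_inner_left C (R x u) y
      have := h2.norm
      rw [norm_zero] at this
      exact (this.eventually (eventually_lt_nhds hε))
    obtain ⟨x, hx⟩ := hsmall.exists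
    obtain ⟨y, hyt, hy⟩ := Set.mem_iUnion₂.mp (htsub (hmemK' x))
    rw [Metric.mem_ball, dist_eq_norm] at hy
    set w := C (R x u) with hw
    have hwc : ‖w‖ = c := hwnorm x
    have e1 : (c:ℝ) ^ 2 = ‖(inner ℂ w w : ℂ)‖ := by
      rw [inner_self_eq_norm_sq_to_K, ← hwc]
      simp [norm_pow]
    have e2 : (inner ℂ w w : ℂ) = inner ℂ (w - y) w + inner ℂ y w := by
      rw [← inner_add_left, sub_add_cancel]
    have e3 : ‖(inner ℂ (w - y) w : ℂ)‖ ≤ ε * c := by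
      calc ‖(inner ℂ (w - y) w : ℂ)‖ ≤ ‖w - y‖ * ‖w‖ := norm_inner_le_norm _ _
        _ ≤ ε * c := by rw [hwc]; exact mul_le_mul hy.le le_rfl (norm_nonneg _) hε.le
    have e4 : ‖(inner ℂ y w : ℂ)‖ < ε := hx y hyt
    calc c ^ 2 = ‖(inner ℂ (w - y) w + inner ℂ y w : ℂ)‖ := by rw [e1, e2]
      _ ≤ ‖(inner ℂ (w - y) w : ℂ)‖ + ‖(inner ℂ y w : ℂ)‖ := norm_add_le _ _
      _ ≤ ε * c + ε := by linarith
  -- conclude c = 0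
  have hc0 : c = 0 := by
    by_contra h
    have hcpos : 0 < c := lt_of_le_of_ne (norm_nonneg _) (Ne.symm h)
    have := key (c ^ 2 / (2 * (c + 1))) (by positivity)
    have h1 : c ^ 2 / (2 * (c + 1)) * c + c ^ 2 / (2 * (c + 1)) =
        c ^ 2 / 2 := by field_simp
    rw [h1] at this
    nlinarith
  exact norm_eq_zero.mp hc0
end
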